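/- Averaged-iterate bound for iBPG: under the standing assumptions, for the iBPG iterates, any k ≥ 0 and any x ∈ dom P ∩ dom φ, F( (1/(k+1))·Σ_{i=0}^{k} x̃^{i+1} ) − F(x) ≤ (1/(k+1))·( L·D_φ(x, x^0) + Σ_{i=0}^{k} ( η_i·‖x̃^{i+1}‖ + η_i·‖x‖ + L·μ_i + ν_i ) ). -/

import Mathlib

open Filter Topology RealInnerProductSpace

/-- The Bregman distance associated with the kernel `φ` whose gradient map is `gφ`. -/
noncomputable def breg {E : Type*} [NormedAddCommGroup E] [InnerProductSpace ℝ E]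
    (φ : E → ℝ) (gφ : E → E) (x y : E) : ℝ :=
  φ x - φ y - ⟪gφ y, x - y⟫

/-- The ν-subdifferential of `P` (a proper function with effective domain `domP`) at `x`. -/
def nuSubdiff {E : Type*} [NormedAddCommGroup E] [InnerProductSpace ℝ E]
    (P : E → ℝ) (domP : Set E) (ν : ℝ) (x : E) : Set E :=
  {d : E | ∀ u ∈ domP, P x + ⟪d, u - x⟫ - ν ≤ P u}

open Classical in
/-- Extension of a real-valued function with effective domain `dom` to an `EReal`-valued
function taking the value `⊤` outside `dom`. -/
noncomputable def extFun {E : Type*} (g : E → ℝ) (dom : Set E) : E → EReal :=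
  fun x => if x ∈ dom then (g x : EReal) else ⊤

/-- `φ` (with effective domain `domφ` and gradient map `gφ`) is essentially smooth. -/
def EssentiallySmooth {E : Type*} [NormedAddCommGroup E] [InnerProductSpace ℝ E]
    [FiniteDimensional ℝ E] (φ : E → ℝ) (domφ : Set E) (gφ : E → E) : Prop :=
  (interior domφ).Nonempty ∧
  (∀ x ∈ interior domφ, HasGradientAt φ (gφ x) x) ∧
  ∀ (u : ℕ → E) (u₀ : E), (∀ n, u n ∈ interior domφ) →
    Tendsto u atTop (𝓝 u₀) → u₀ ∈ frontier (interior domφ) →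
    Tendsto (fun n => ‖gφ (u n)‖) atTop atTop

/-- The standing assumptions (Assumption A) for the problem `inf {P x + f x : x ∈ Q}`. -/
structure Standing {E : Type*} [NormedAddCommGroup E] [InnerProductSpace ℝ E]
    [FiniteDimensional ℝ E] (Q domφ domP domf X : Set E)
    (φ P f : E → ℝ) (gφ gf : E → E) (L : ℝ) : Prop where
  hQclosed : IsClosed Q
  hQconv : Convex ℝ Q
  hQint : (interior Q).Nonempty
  hφconv : ConvexOn ℝ domφ φ
  hφstrict : StrictConvexOn ℝ (interior domφ) φ
  hφsmooth : EssentiallySmooth φ domφ gφ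
  hφQ : closure domφ = Q
  hPne : domP.Nonempty
  hPconv : ConvexOn ℝ domP P
  hPclosed : LowerSemicontinuous (extFun P domP)
  hPQ : (domP ∩ interior Q).Nonempty
  hfconv : ConvexOn ℝ domf f
  hfclosed : LowerSemicontinuous (extFun f domf)
  hfdom : domφ ⊆ domf
  hfgrad : ∀ x ∈ interior domφ, HasGradientAt f (gf x) x
  hXclosed : IsClosed X
  hXconv : Convex ℝ X
  hXsup : domP ∩ domφ ⊆ X
  hLnn : 0 ≤ L
  hrel : ∀ u ∈ interior domφ ∩ X, ∀ v ∈ domφ ∩ X,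
    f v ≤ f u + ⟪gf u, v - u⟫ + L * breg φ gφ v u

/-- The iBPG iterates with inexactness tolerance sequences `η`, `μ`, `ν`. -/
structure IBPGIter {E : Type*} [NormedAddCommGroup E] [InnerProductSpace ℝ E]
    [FiniteDimensional ℝ E] (domφ domP X : Set E) (φ P : E → ℝ) (gφ gf : E → E) (L : ℝ)
    (η μ ν : ℕ → ℝ) (x xt : ℕ → E) : Prop where
  hη : ∀ k, 0 ≤ η k
  hμ : ∀ k, 0 ≤ μ k
  hν : ∀ k, 0 ≤ ν k
  hx : ∀ k, x k ∈ X ∩ interior domφ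
  hxt : ∀ k, xt k ∈ domP ∩ domφ
  hinex : ∀ k, ∃ d ∈ nuSubdiff P domP (ν k) (xt (k+1)),
    ‖d + gf (x k) + L • (gφ (x (k+1)) - gφ (x k))‖ ≤ η k
  hdist : ∀ k, breg φ gφ (xt (k+1)) (x (k+1)) ≤ μ k

/-- **Averaged-iterate bound for iBPG** (Theorem 3.1(i), first bound). Under the standing
assumptions, for the iBPG iterates, any `k ≥ 0` and any `x ∈ dom P ∩ dom φ`,
`F((1/(k+1)) Σ_{i=0}^k x̃^{i+1}) − F(x) ≤
  (1/(k+1)) (L D_φ(x, x^0) + Σ_{i=0}^k (η_i ‖x̃^{i+1}‖ + η_i ‖x‖ + L μ_i + ν_i))`,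
where `F = P + f`. -/
private lemma grad_ineq {E : Type*} [NormedAddCommGroup E] [InnerProductSpace ℝ E] [CompleteSpace E]
    {s : Set E} {g : E → ℝ} (hg : ConvexOn ℝ s g) {x y : E} (hx : x ∈ s) (hy : y ∈ s)
    {G : E} (hG : HasGradientAt g G x) : g x + ⟪G, y - x⟫ ≤ g y := by
  set v := y - x with hv
  set h : ℝ → ℝ := fun t => g (x + t • v) with hh
  have hline : HasDerivAt (fun t : ℝ => x + t • v) v 0 := by
    simpa using ((hasDerivAt_id (0:ℝ)).smul_const v).const_add x
  have hF := (hasGradientAt_iff_hasFDerivAt.mp hG)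
  have hd : HasDerivAt h ⟪G, v⟫ 0 := by
    have hx0 : x + (0:ℝ) • v = x := by simp
    have := (hx0 ▸ hF : HasFDerivAt g _ (x + (0:ℝ) • v)).comp_hasDerivAt 0 hline
    simpa [hh, Function.comp_def] using this
  have htend : Tendsto (slope h 0) (𝓝[>] 0) (𝓝 ⟪G, v⟫) :=
    (hasDerivAt_iff_tendsto_slope.mp hd).mono_left
      (nhdsWithin_mono 0 (fun t ht => ne_of_gt ht))
  have hev : ∀ᶠ t in 𝓝[>] (0:ℝ), slope h 0 t ≤ g y - g x := by
    filter_upwards [Ioo_mem_nhdsGT_of_mem (Set.mem_Ico.mpr ⟨le_refl (0:ℝ), one_pos⟩)]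
      with t ht
    obtain ⟨ht0, ht1⟩ := ht
    have hcomb : x + t • v = (1 - t) • x + t • y := by
      rw [hv]; module
    have hconv : h t ≤ (1 - t) * g x + t * g y := by
      rw [hh]; simp only
      rw [hcomb]
      exact hg.2 hx hy (by linarith) (le_of_lt ht0) (by ring)
    have h0 : h 0 = g x := by simp [hh]
    rw [slope_def_field]
    have : (h t - h 0) / (t - 0) ≤ g y - g x := by
      rw [h0, sub_zero, div_le_iff₀ ht0]
      nlinarith
    simpa using this
  have := le_of_tendsto htend hev
  linarith


theorem iBPG_averaged_iterate_bound
    {E : Type*} [NormedAddCommGroup E] [InnerProductSpace ℝ E] [FiniteDimensional ℝ E]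
    (Q domφ domP domf X : Set E) (φ P f : E → ℝ) (gφ gf : E → E) (L : ℝ)
    (hstand : Standing Q domφ domP domf X φ P f gφ gf L)
    (η μ ν : ℕ → ℝ) (x xt : ℕ → E)
    (hiter : IBPGIter domφ domP X φ P gφ gf L η μ ν x xt) :
    ∀ (k : ℕ), ∀ xx ∈ domP ∩ domφ,
      (P (((k : ℝ) + 1)⁻¹ • ∑ i ∈ Finset.range (k+1), xt (i+1))
        + f (((k : ℝ) + 1)⁻¹ • ∑ i ∈ Finset.range (k+1), xt (i+1))) - (P xx + f xx) ≤
        ((k : ℝ) + 1)⁻¹ * (L * breg φ gφ xx (x 0)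
          + ∑ i ∈ Finset.range (k+1), (η i * ‖xt (i+1)‖ + η i * ‖xx‖ + L * μ i + ν i)) := by
  intro k xx hxx
  obtain ⟨hxxP, hxxφ⟩ := hxx
  have hgrad := hstand.hφsmooth.2.1
  -- per-step bound
  have key : ∀ i : ℕ, (P (xt (i+1)) + f (xt (i+1))) - (P xx + f xx) ≤
      (η i * ‖xt (i+1)‖ + η i * ‖xx‖ + L * μ i + ν i)
      + (L * breg φ gφ xx (x i) - L * breg φ gφ xx (x (i+1))) := by
    intro i
    obtain ⟨d, hd, hΔ⟩ := hiter.hinex i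
    set Δ := d + gf (x i) + L • (gφ (x (i+1)) - gφ (x i)) with hΔdef
    have hxti := hiter.hxt (i+1)
    have hxi := hiter.hx i
    have ha : P (xt (i+1)) + ⟪d, xx - xt (i+1)⟫ - ν i ≤ P xx := hd xx hxxP
    have hb : f (xt (i+1)) ≤ f (x i) + ⟪gf (x i), xt (i+1) - x i⟫
        + L * breg φ gφ (xt (i+1)) (x i) :=
      hstand.hrel (x i) ⟨hxi.2, hxi.1⟩ (xt (i+1)) ⟨hxti.2, hstand.hXsup hxti⟩
    have hc : f (x i) + ⟪gf (x i), xx - x i⟫ ≤ f xx :=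
      grad_ineq hstand.hfconv (hstand.hfdom (interior_subset hxi.2)) (hstand.hfdom hxxφ)
        (hstand.hfgrad (x i) hxi.2)
    have hd3L : L * ⟪gφ (x (i+1)) - gφ (x i), xx - xt (i+1)⟫ =
        L * breg φ gφ xx (x i) - L * breg φ gφ xx (x (i+1))
        - L * breg φ gφ (xt (i+1)) (x i) + L * breg φ gφ (xt (i+1)) (x (i+1)) := by
      have h3 : ⟪gφ (x (i+1)) - gφ (x i), xx - xt (i+1)⟫ =
          (breg φ gφ xx (x i) - breg φ gφ xx (x (i+1)))
          - (breg φ gφ (xt (i+1)) (x i) - breg φ gφ (xt (i+1)) (x (i+1))) := by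
        simp only [breg, inner_sub_left, inner_sub_right]
        ring
      rw [h3]; ring
    have hf1 : -⟪Δ, xx - xt (i+1)⟫ ≤ η i * ‖xt (i+1)‖ + η i * ‖xx‖ := by
      calc -⟪Δ, xx - xt (i+1)⟫ = ⟪-Δ, xx - xt (i+1)⟫ := by rw [inner_neg_left]
        _ ≤ ‖-Δ‖ * ‖xx - xt (i+1)‖ := real_inner_le_norm _ _
        _ ≤ η i * (‖xx‖ + ‖xt (i+1)‖) := by
            apply mul_le_mul (by simpa using hΔ) (norm_sub_le _ _) (norm_nonneg _)
              (hiter.hη i)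
        _ = η i * ‖xt (i+1)‖ + η i * ‖xx‖ := by ring
    have hdinner : ⟪Δ, xx - xt (i+1)⟫ = ⟪d, xx - xt (i+1)⟫ + ⟪gf (x i), xx - xt (i+1)⟫
        + L * ⟪gφ (x (i+1)) - gφ (x i), xx - xt (i+1)⟫ := by
      simp [hΔdef, inner_add_left, real_inner_smul_left]
    have hgfsplit : ⟪gf (x i), xx - xt (i+1)⟫ =
        ⟪gf (x i), xx - x i⟫ - ⟪gf (x i), xt (i+1) - x i⟫ := by
      rw [← inner_sub_right]
      congr 1
      abel
    have he : L * breg φ gφ (xt (i+1)) (x (i+1)) ≤ L * μ i :=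
      mul_le_mul_of_nonneg_left (hiter.hdist i) hstand.hLnn
    linarith [ha, hb, hc, hd3L, hf1, hdinner, hgfsplit, he]
  have hxk1 := hiter.hx (k+1)
  have hDnn : 0 ≤ breg φ gφ xx (x (k+1)) := by
    have := grad_ineq hstand.hφconv (interior_subset hxk1.2) hxxφ (hgrad _ hxk1.2)
    simp only [breg]
    linarith
  have hsum : ∑ i ∈ Finset.range (k+1), ((P (xt (i+1)) + f (xt (i+1))) - (P xx + f xx)) ≤
      L * breg φ gφ xx (x 0)
      + ∑ i ∈ Finset.range (k+1), (η i * ‖xt (i+1)‖ + η i * ‖xx‖ + L * μ i + ν i) := by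
    calc ∑ i ∈ Finset.range (k+1), ((P (xt (i+1)) + f (xt (i+1))) - (P xx + f xx))
        ≤ ∑ i ∈ Finset.range (k+1), ((η i * ‖xt (i+1)‖ + η i * ‖xx‖ + L * μ i + ν i)
          + (L * breg φ gφ xx (x i) - L * breg φ gφ xx (x (i+1)))) :=
          Finset.sum_le_sum (fun i _ => key i)
      _ = (∑ i ∈ Finset.range (k+1), (η i * ‖xt (i+1)‖ + η i * ‖xx‖ + L * μ i + ν i))
          + (L * breg φ gφ xx (x 0) - L * breg φ gφ xx (x (k+1))) := by
          rw [Finset.sum_add_distrib, Finset.sum_range_sub' (fun i => L * breg φ gφ xx (x i))]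
      _ ≤ L * breg φ gφ xx (x 0)
          + ∑ i ∈ Finset.range (k+1), (η i * ‖xt (i+1)‖ + η i * ‖xx‖ + L * μ i + ν i) := by
          have := mul_nonneg hstand.hLnn hDnn
          linarith
  have hkpos : (0:ℝ) < (k:ℝ) + 1 := by positivity
  have hcnn : (0:ℝ) ≤ ((k:ℝ) + 1)⁻¹ := by positivity
  have hw1 : ∑ _i ∈ Finset.range (k+1), ((k:ℝ) + 1)⁻¹ = 1 := by
    rw [Finset.sum_const, Finset.card_range, nsmul_eq_mul]
    push_cast
    field_simp
  have havg : (((k : ℝ) + 1)⁻¹ • ∑ i ∈ Finset.range (k+1), xt (i+1))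
      = ∑ i ∈ Finset.range (k+1), ((k:ℝ) + 1)⁻¹ • xt (i+1) := Finset.smul_sum
  have hP : P (((k : ℝ) + 1)⁻¹ • ∑ i ∈ Finset.range (k+1), xt (i+1))
      ≤ ((k:ℝ) + 1)⁻¹ * ∑ i ∈ Finset.range (k+1), P (xt (i+1)) := by
    rw [havg, Finset.mul_sum]
    exact hstand.hPconv.map_sum_le (fun i _ => hcnn) hw1 (fun i _ => (hiter.hxt (i+1)).1)
  have hf : f (((k : ℝ) + 1)⁻¹ • ∑ i ∈ Finset.range (k+1), xt (i+1))
      ≤ ((k:ℝ) + 1)⁻¹ * ∑ i ∈ Finset.range (k+1), f (xt (i+1)) := by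
    rw [havg, Finset.mul_sum]
    exact hstand.hfconv.map_sum_le (fun i _ => hcnn) hw1
      (fun i _ => hstand.hfdom (hiter.hxt (i+1)).2)
  have hsum' : ∑ i ∈ Finset.range (k+1), (P (xt (i+1)) + f (xt (i+1))) ≤
      L * breg φ gφ xx (x 0)
      + (∑ i ∈ Finset.range (k+1), (η i * ‖xt (i+1)‖ + η i * ‖xx‖ + L * μ i + ν i))
      + ((k:ℝ) + 1) * (P xx + f xx) := by
    rw [Finset.sum_sub_distrib, Finset.sum_const, Finset.card_range, nsmul_eq_mul] at hsum
    push_cast at hsum ⊢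
    linarith
  have hmul := mul_le_mul_of_nonneg_left hsum' hcnn
  have hPsum : ((k:ℝ) + 1)⁻¹ * ∑ i ∈ Finset.range (k+1), (P (xt (i+1)) + f (xt (i+1)))
      = ((k:ℝ) + 1)⁻¹ * ∑ i ∈ Finset.range (k+1), P (xt (i+1))
      + ((k:ℝ) + 1)⁻¹ * ∑ i ∈ Finset.range (k+1), f (xt (i+1)) := by
    rw [Finset.sum_add_distrib]; ring
  have hcancel : ((k:ℝ) + 1)⁻¹ * (((k:ℝ) + 1) * (P xx + f xx)) = P xx + f xx := by
    rw [← mul_assoc, inv_mul_cancel₀ (ne_of_gt hkpos), one_mul]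
  have hrhs : ((k:ℝ) + 1)⁻¹ * (L * breg φ gφ xx (x 0)
      + (∑ i ∈ Finset.range (k+1), (η i * ‖xt (i+1)‖ + η i * ‖xx‖ + L * μ i + ν i))
      + ((k:ℝ) + 1) * (P xx + f xx))
      = ((k:ℝ) + 1)⁻¹ * (L * breg φ gφ xx (x 0)
      + ∑ i ∈ Finset.range (k+1), (η i * ‖xt (i+1)‖ + η i * ‖xx‖ + L * μ i + ν i))
      + (P xx + f xx) := by
    rw [mul_add, hcancel]
  rw [hrhs] at hmul
  linarith [hP, hf, hmul, hPsum]
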